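/- Let n ≥ 1, L > 0, μ ≤ 0, and let f : ℝⁿ → ℝ belong to F_{μ,L} with f⋆ = inf f finite. Let x¹ ∈ ℝⁿ with f(x¹) > f⋆ (f is not minimized at x¹). Suppose there exist θ ∈ (0, 1) and μ_p > 0 such that the Łojasiewicz inequality (f(x) − f⋆)^{2θ} ≤ (1/(2μ_p))‖∇f(x)‖² holds for all x in the sublevel set X = {x : f(x) ≤ f(x¹)}. Then θ ≥ 1/2. -/

import Mathlib

open Set
open scoped RealInnerProductSpace

lemma descent_aux {n : ℕ} (f : EuclideanSpace ℝ (Fin n) → ℝ)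
    (f' : EuclideanSpace ℝ (Fin n) → EuclideanSpace ℝ (Fin n)) (L : ℝ)
    (hgrad : ∀ x, HasGradientAt f (f' x) x)
    (hupper : ConvexOn ℝ univ (fun x => L / 2 * ‖x‖ ^ 2 - f x))
    (x y : EuclideanSpace ℝ (Fin n)) :
    f y ≤ f x + ⟪f' x, y - x⟫ + L / 2 * ‖y - x‖ ^ 2 := by
  set v := y - x with hv
  set ψ : ℝ → ℝ := fun t => L / 2 * ‖t • v + x‖ ^ 2 - f (t • v + x) with hψ
  have hvx : ∀ t : ℝ, t • v + x = x + t • (y - x) := by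
    intro t; rw [hv]; abel
  have hconv : ConvexOn ℝ univ ψ := by
    have h := hupper.comp_affineMap (AffineMap.lineMap x y : ℝ →ᵃ[ℝ] _)
    have heq : ψ = (fun z => L / 2 * ‖z‖ ^ 2 - f z) ∘ (AffineMap.lineMap x y : ℝ →ᵃ[ℝ] _) := by
      funext t
      simp [ψ, AffineMap.lineMap_apply, hvx t, hv]
    rw [heq]
    simpa using h
  have hpoly : ∀ t : ℝ, ‖t • v + x‖ ^ 2 = t ^ 2 * ‖v‖ ^ 2 + 2 * (t * ⟪v, x⟫) + ‖x‖ ^ 2 := by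
    intro t
    rw [norm_add_sq_real, norm_smul, real_inner_smul_left]
    simp [mul_pow]
  have hc : HasDerivAt (fun t : ℝ => t • v + x) v 0 := by
    simpa using ((hasDerivAt_id (0 : ℝ)).smul_const v).add_const x
  have hfd : HasFDerivAt f (InnerProductSpace.toDual ℝ _ (f' x)) x :=
    hasGradientAt_iff_hasFDerivAt.mp (hgrad x)
  have hfd0 : HasFDerivAt f (InnerProductSpace.toDual ℝ _ (f' x)) ((0:ℝ) • v + x) := by
    simpa using hfd
  have h2 : HasDerivAt (fun t : ℝ => f (t • v + x)) ⟪f' x, v⟫ 0 := by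
    have := hfd0.comp_hasDerivAt 0 hc
    simp at this
    exact this
  have h1 : HasDerivAt (fun t : ℝ => L / 2 * ‖t • v + x‖ ^ 2) (L * ⟪v, x⟫) 0 := by
    have ha : HasDerivAt (fun t : ℝ => t ^ 2 * ‖v‖ ^ 2) 0 0 := by
      simpa using (hasDerivAt_pow 2 (0 : ℝ)).mul_const (‖v‖ ^ 2)
    have hb : HasDerivAt (fun t : ℝ => 2 * (t * ⟪v, x⟫)) (2 * ⟪v, x⟫) 0 := by
      simpa using ((hasDerivAt_id (0 : ℝ)).mul_const ⟪v, x⟫).const_mul 2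
    have := (((ha.add hb).add_const (‖x‖ ^ 2)).const_mul (L / 2))
    have heq : (fun t : ℝ => L / 2 * (t ^ 2 * ‖v‖ ^ 2 + 2 * (t * ⟪v, x⟫) + ‖x‖ ^ 2))
        = fun t : ℝ => L / 2 * ‖t • v + x‖ ^ 2 := by
      funext t; rw [hpoly t]
    simp only [Pi.add_apply] at this
    rw [heq] at this
    rwa [show L / 2 * (0 + 2 * ⟪v, x⟫) = L * ⟪v, x⟫ by ring] at this
  have hψ' : HasDerivAt ψ (L * ⟪v, x⟫ - ⟪f' x, v⟫) 0 := h1.sub h2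
  have hslope := hconv.le_slope_of_hasDerivAt (mem_univ 0) (mem_univ 1) zero_lt_one hψ'
  have hs : slope ψ 0 1 = ψ 1 - ψ 0 := by simp [slope_def_field]
  rw [hs] at hslope
  have hψ1 : ψ 1 = L / 2 * ‖y‖ ^ 2 - f y := by simp [ψ, hv]
  have hψ0 : ψ 0 = L / 2 * ‖x‖ ^ 2 - f x := by simp [ψ]
  rw [hψ1, hψ0] at hslope
  have hvxy : v + x = y := by rw [hv]; abel
  have hynorm : ‖y‖ ^ 2 = ‖v‖ ^ 2 + 2 * ⟪v, x⟫ + ‖x‖ ^ 2 := by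
    have h := hpoly 1
    rw [one_smul, hvxy] at h
    simpa using h
  have hy2 : L / 2 * ‖y‖ ^ 2 = L / 2 * ‖v‖ ^ 2 + L * ⟪v, x⟫ + L / 2 * ‖x‖ ^ 2 := by
    rw [hynorm]; ring
  linarith [hslope, hy2]

theorem stmt_6 (n : ℕ) (hn : 1 ≤ n)
    (f : EuclideanSpace ℝ (Fin n) → ℝ)
    (f' : EuclideanSpace ℝ (Fin n) → EuclideanSpace ℝ (Fin n))
    (L μ : ℝ) (hL : 0 < L) (hμ : μ ≤ 0)
    (hgrad : ∀ x, HasGradientAt f (f' x) x)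
    (hupper : ConvexOn ℝ univ (fun x => L / 2 * ‖x‖ ^ 2 - f x))
    (hlower : ConvexOn ℝ univ (fun x => f x - μ / 2 * ‖x‖ ^ 2))
    (fstar : ℝ) (hfstar : IsGLB (range f) fstar)
    (x1 : EuclideanSpace ℝ (Fin n)) (hx1 : fstar < f x1)
    (θ μp : ℝ) (hθ : θ ∈ Ioo (0 : ℝ) 1) (hμp : 0 < μp)
    (hLoj : ∀ x, f x ≤ f x1 →
      (f x - fstar) ^ (2 * θ) ≤ 1 / (2 * μp) * ‖f' x‖ ^ 2) :
    (1 : ℝ) / 2 ≤ θ := by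
  by_contra hc
  push_neg at hc
  -- gradient bound from smoothness
  have hfbound : ∀ x, ‖f' x‖ ^ 2 ≤ 2 * L * (f x - fstar) := by
    intro x
    have key := descent_aux f f' L hgrad hupper x (x - L⁻¹ • f' x)
    have h1 : (x - L⁻¹ • f' x) - x = -(L⁻¹ • f' x) := by abel
    rw [h1] at key
    have h2 : ⟪f' x, -(L⁻¹ • f' x)⟫ = -(L⁻¹ * ‖f' x‖ ^ 2) := by
      rw [inner_neg_right, real_inner_smul_right, real_inner_self_eq_norm_sq]
    have h3 : ‖-(L⁻¹ • f' x)‖ ^ 2 = L⁻¹ ^ 2 * ‖f' x‖ ^ 2 := by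
      rw [norm_neg, norm_smul, mul_pow]
      simp [abs_of_pos (inv_pos.mpr hL)]
    rw [h2, h3] at key
    have h4 : fstar ≤ f (x - L⁻¹ • f' x) := hfstar.1 ⟨_, rfl⟩
    have hLne : L ≠ 0 := ne_of_gt hL
    have h5 : f x + -(L⁻¹ * ‖f' x‖ ^ 2) + L / 2 * (L⁻¹ ^ 2 * ‖f' x‖ ^ 2)
        = f x - 1 / (2 * L) * ‖f' x‖ ^ 2 := by field_simp; ring
    rw [h5] at key
    have := le_trans h4 key
    have h6 : 1 / (2 * L) * ‖f' x‖ ^ 2 ≤ f x - fstar := by linarith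
    calc ‖f' x‖ ^ 2 = 2 * L * (1 / (2 * L) * ‖f' x‖ ^ 2) := by field_simp
      _ ≤ 2 * L * (f x - fstar) := by
          have : (0:ℝ) < 2 * L := by linarith
          exact mul_le_mul_of_nonneg_left h6 (le_of_lt this)
  set C : ℝ := L / μp with hCdef
  have hC : 0 < C := div_pos hL hμp
  set β : ℝ := 1 - 2 * θ with hβdef
  have hβ : 0 < β := by simp [hβdef]; linarith
  set ε0 : ℝ := (1 / (C + 1)) ^ (1 / β) with hε0def
  have hε0 : 0 < ε0 := Real.rpow_pos_of_pos (by positivity) _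
  set ε : ℝ := min ((f x1 - fstar) / 2) (ε0 / 2) with hεdef
  have hε : 0 < ε := lt_min (by linarith) (by linarith)
  have hεle : fstar + ε ≤ f x1 := by
    have := min_le_left ((f x1 - fstar) / 2) (ε0 / 2)
    rw [← hεdef] at this
    linarith
  -- find a point with value exactly fstar + ε
  obtain ⟨z, hzmem, hz1, hz2⟩ := hfstar.exists_between (show fstar < fstar + ε by linarith)
  obtain ⟨x0, rfl⟩ := hzmem
  have hfc : Continuous f := by
    rw [continuous_iff_continuousAt]
    exact fun x => ((hgrad x).differentiableAt).continuousAt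
  have hline : Continuous (fun t : ℝ => f (x0 + t • (x1 - x0))) := by
    apply hfc.comp
    exact continuous_const.add (continuous_id.smul continuous_const)
  have hivt := intermediate_value_Icc (zero_le_one (α := ℝ)) hline.continuousOn
  have hmem : fstar + ε ∈ Icc ((fun t : ℝ => f (x0 + t • (x1 - x0))) 0)
      ((fun t : ℝ => f (x0 + t • (x1 - x0))) 1) := by
    constructor
    · simpa using le_of_lt hz2
    · simpa using hεle
  obtain ⟨t, _, ht⟩ := hivt hmem
  set xε := x0 + t • (x1 - x0) with hxεdef
  have hfxε : f xε = fstar + ε := ht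
  have hloj := hLoj xε (by rw [hfxε]; linarith)
  rw [hfxε, add_sub_cancel_left] at hloj
  -- upper bound: 1/(2μp) ‖f' xε‖² ≤ C ε
  have hub : 1 / (2 * μp) * ‖f' xε‖ ^ 2 ≤ C * ε := by
    have h1 := hfbound xε
    rw [hfxε, add_sub_cancel_left] at h1
    have h2 : (0:ℝ) < 1 / (2 * μp) := by positivity
    calc 1 / (2 * μp) * ‖f' xε‖ ^ 2 ≤ 1 / (2 * μp) * (2 * L * ε) :=
          mul_le_mul_of_nonneg_left h1 (le_of_lt h2)
      _ = C * ε := by rw [hCdef]; field_simp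
  -- lower bound: C ε < ε ^ (2θ)
  have hεlt0 : ε < ε0 := by
    have := min_le_right ((f x1 - fstar) / 2) (ε0 / 2)
    rw [← hεdef] at this
    linarith
  have hβε : ε ^ β < 1 / (C + 1) := by
    have h2 : ε ^ β < ε0 ^ β := Real.rpow_lt_rpow (le_of_lt hε) hεlt0 hβ
    have h3 : ε0 ^ β = 1 / (C + 1) := by
      rw [hε0def, ← Real.rpow_mul (by positivity)]
      rw [one_div_mul_cancel (ne_of_gt hβ), Real.rpow_one]
    rwa [h3] at h2
  have hεpow : 0 < ε ^ (2 * θ) := Real.rpow_pos_of_pos hε _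
  have hsplit : ε = ε ^ β * ε ^ (2 * θ) := by
    rw [← Real.rpow_add hε]
    have : β + 2 * θ = 1 := by rw [hβdef]; ring
    rw [this, Real.rpow_one]
  have hlt : C * ε < ε ^ (2 * θ) := by
    have h4 : C * ε ^ β < 1 := by
      have h6 := mul_lt_mul_of_pos_left hβε hC
      have h5 : C * (1 / (C + 1)) < 1 := by
        rw [mul_one_div, div_lt_one (by linarith : (0:ℝ) < C + 1)]
        linarith
      linarith
    calc C * ε = (C * ε ^ β) * ε ^ (2 * θ) := by nth_rewrite 1 [hsplit]; ring
      _ < 1 * ε ^ (2 * θ) := mul_lt_mul_of_pos_right h4 hεpow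
      _ = ε ^ (2 * θ) := one_mul _
  linarith
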